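/- Let (A, A', M, M', f, g) be a surjective Morita context (f and g isomorphisms). Then the map A' → End_A(M)^op sending a' to the endomorphism m ↦ m a' is a ring isomorphism, and the map M' → Hom_A(M, A) sending m' to the map m ↦ f(m ⊗ m') is an (A',A)-bimodule isomorphism. -/

import Mathlib

section NcT
variable (R : Type) [Ring R] (M N : Type) [AddCommGroup M] [AddCommGroup N]
  [Module Rᵐᵒᵖ M] [Module R N]

/-- The subgroup of relations defining the balanced tensor product `M ⊗_R N` of a
right `R`-module `M` and a left `R`-module `N`. -/
def ncRel : AddSubgroup (FreeAbelianGroup (M × N)) := AddSubgroup.closure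
  ({z | ∃ m₁ m₂ n, z = FreeAbelianGroup.of (m₁ + m₂, n)
          - FreeAbelianGroup.of (m₁, n) - FreeAbelianGroup.of (m₂, n)} ∪
   {z | ∃ m n₁ n₂, z = FreeAbelianGroup.of (m, n₁ + n₂)
          - FreeAbelianGroup.of (m, n₁) - FreeAbelianGroup.of (m, n₂)} ∪
   {z | ∃ (r : R) (m : M) (n : N), z = FreeAbelianGroup.of (MulOpposite.op r • m, n)
          - FreeAbelianGroup.of (m, r • n)})

/-- The balanced tensor product `M ⊗_R N` of a right `R`-module and a left
`R`-module, as an abelian group. -/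
def NcT : Type := FreeAbelianGroup (M × N) ⧸ ncRel R M N

instance : AddCommGroup (NcT R M N) :=
  inferInstanceAs (AddCommGroup (FreeAbelianGroup (M × N) ⧸ ncRel R M N))

/-- The element `m ⊗ n` of `M ⊗_R N`. -/
def ntmul (m : M) (n : N) : NcT R M N :=
  QuotientAddGroup.mk (FreeAbelianGroup.of (m, n))

end NcT

section Lemmas
variable {R : Type} [Ring R] {M N : Type} [AddCommGroup M] [AddCommGroup N]
  [Module Rᵐᵒᵖ M] [Module R N]

theorem ntmul_add_left (m₁ m₂ : M) (n : N) :
    ntmul R M N (m₁ + m₂) n = ntmul R M N m₁ n + ntmul R M N m₂ n := by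
  show (QuotientAddGroup.mk _ : FreeAbelianGroup (M × N) ⧸ ncRel R M N)
      = QuotientAddGroup.mk _ + QuotientAddGroup.mk _
  refine Eq.trans ?_ (QuotientAddGroup.mk_add _ _ _)
  rw [QuotientAddGroup.eq]
  have hg : _ ∈ ncRel R M N := AddSubgroup.subset_closure (Or.inl (Or.inl ⟨m₁, m₂, n, rfl⟩))
  convert neg_mem hg using 1
  abel

theorem ntmul_add_right (m : M) (n₁ n₂ : N) :
    ntmul R M N m (n₁ + n₂) = ntmul R M N m n₁ + ntmul R M N m n₂ := by
  show (QuotientAddGroup.mk _ : FreeAbelianGroup (M × N) ⧸ ncRel R M N)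
      = QuotientAddGroup.mk _ + QuotientAddGroup.mk _
  refine Eq.trans ?_ (QuotientAddGroup.mk_add _ _ _)
  rw [QuotientAddGroup.eq]
  have hg : _ ∈ ncRel R M N := AddSubgroup.subset_closure (Or.inl (Or.inr ⟨m, n₁, n₂, rfl⟩))
  convert neg_mem hg using 1
  abel

theorem ntmul_smul (r : R) (m : M) (n : N) :
    ntmul R M N (MulOpposite.op r • m) n = ntmul R M N m (r • n) := by
  show (QuotientAddGroup.mk _ : FreeAbelianGroup (M × N) ⧸ ncRel R M N)
      = QuotientAddGroup.mk _
  rw [QuotientAddGroup.eq]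
  have hg : _ ∈ ncRel R M N := AddSubgroup.subset_closure (Or.inr ⟨r, m, n, rfl⟩)
  convert neg_mem hg using 1
  abel

theorem ntmul_zero_left (n : N) : ntmul R M N 0 n = 0 := by
  have h := ntmul_add_left (R := R) (M := M) (N := N) 0 0 n
  rw [add_zero] at h
  exact right_eq_add.mp h

theorem ntmul_zero_right (m : M) : ntmul R M N m 0 = 0 := by
  have h := ntmul_add_right (R := R) (M := M) (N := N) m 0 0
  rw [add_zero] at h
  exact right_eq_add.mp h

theorem ntmul_neg_right (m : M) (n : N) : ntmul R M N m (-n) = -ntmul R M N m n := by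
  have h := ntmul_add_right (R := R) (M := M) (N := N) m n (-n)
  rw [add_neg_cancel, ntmul_zero_right] at h
  exact eq_neg_of_add_eq_zero_right h.symm

theorem NcT.induction_on {P : NcT R M N → Prop} (z : NcT R M N)
    (h0 : P 0) (hp : ∀ m n, P (ntmul R M N m n))
    (hn : ∀ w, P w → P (-w)) (ha : ∀ w₁ w₂, P w₁ → P w₂ → P (w₁ + w₂)) : P z := by
  obtain ⟨w, rfl⟩ := QuotientAddGroup.mk_surjective (z : FreeAbelianGroup (M × N) ⧸ ncRel R M N)
  induction w using FreeAbelianGroup.induction_on with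
  | zero => exact h0
  | of x => exact hp x.1 x.2
  | neg x hx => exact hn _ (hp x.1 x.2)
  | add x y hx hy => exact ha _ _ hx hy

end Lemmas


/-- Let `(A, A', M, M', f, g)` be a surjective Morita context:
`M` an `(A,A')`-bimodule, `M'` an `(A',A)`-bimodule, and
`f : M ⊗_{A'} M' → A`, `g : M' ⊗_A M → A'` bijective bimodule homomorphisms
satisfying the associativity laws `f(m ⊗ m')·n = m·g(m' ⊗ n)` and
`g(m' ⊗ m)·n' = m'·f(m ⊗ n')`.  Then `a' ↦ (m ↦ m·a')` is a ring isomorphism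
`A' ≅ End_A(M)^op`, and `m' ↦ f(− ⊗ m')` is an `(A',A)`-bimodule isomorphism
`M' ≅ Hom_A(M,A)`, the latter with bimodule structure `(a'·φ·a)(m) = φ(m·a')·a`. -/
theorem stmt18 {A A' M M' : Type} [Ring A] [Ring A']
    [AddCommGroup M] [Module A M] [Module A'ᵐᵒᵖ M] [SMulCommClass A A'ᵐᵒᵖ M]
    [AddCommGroup M'] [Module A' M'] [Module Aᵐᵒᵖ M'] [SMulCommClass A' Aᵐᵒᵖ M']
    (f : NcT A' M M' →+ A) (g : NcT A M' M →+ A')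
    -- `f` is a homomorphism of `(A,A)`-bimodules
    (hfl : ∀ (a : A) (m : M) (m' : M'),
      f (ntmul A' M M' (a • m) m') = a * f (ntmul A' M M' m m'))
    (hfr : ∀ (a : A) (m : M) (m' : M'),
      f (ntmul A' M M' m (MulOpposite.op a • m')) = f (ntmul A' M M' m m') * a)
    -- `g` is a homomorphism of `(A',A')`-bimodules
    (hgl : ∀ (a' : A') (m' : M') (m : M),
      g (ntmul A M' M (a' • m') m) = a' * g (ntmul A M' M m' m))
    (hgr : ∀ (a' : A') (m' : M') (m : M),
      g (ntmul A M' M m' (MulOpposite.op a' • m)) = g (ntmul A M' M m' m) * a')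
    -- the context is surjective: `f` and `g` are isomorphisms
    (hfbij : Function.Bijective f) (hgbij : Function.Bijective g)
    -- the associativity laws
    (hassoc₁ : ∀ (m n : M) (m' : M'),
      f (ntmul A' M M' m m') • n = MulOpposite.op (g (ntmul A M' M m' n)) • m)
    (hassoc₂ : ∀ (m' n' : M') (m : M),
      g (ntmul A M' M m' m) • n' = MulOpposite.op (f (ntmul A' M M' m n')) • m') :
    -- `A' ≅ End_A(M)^op` via `a' ↦ (m ↦ m·a')`
    (∃ e : A' ≃+* (Module.End A M)ᵐᵒᵖ,
      ∀ (a' : A') (m : M), (MulOpposite.unop (e a')) m = MulOpposite.op a' • m) ∧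
    -- `M' ≅ Hom_A(M,A)`, an `(A',A)`-bimodule isomorphism
    (∃ ψ : M' ≃+ (M →ₗ[A] A),
      (∀ (m' : M') (m : M), ψ m' m = f (ntmul A' M M' m m')) ∧
      (∀ (a' : A') (m' : M') (m : M),
        ψ (a' • m') m = ψ m' (MulOpposite.op a' • m)) ∧
      (∀ (a : A) (m' : M') (m : M),
        ψ (MulOpposite.op a • m') m = ψ m' m * a)) := by
  classical
  -- Part 1 injectivity key
  have key_inj : ∀ a' : A', (∀ m : M, MulOpposite.op a' • m = 0) → a' = 0 := by
    intro a' h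
    obtain ⟨z, hz⟩ := hgbij.2 1
    have hw : ∀ w : NcT A M' M, g w * a' = 0 := by
      intro w
      induction w using NcT.induction_on with
      | h0 => rw [map_zero, zero_mul]
      | hp m' m => rw [← hgr, h m, ntmul_zero_right, map_zero]
      | hn w hw => rw [map_neg, neg_mul, hw, neg_zero]
      | ha w₁ w₂ h₁ h₂ => rw [map_add, add_mul, h₁, h₂, add_zero]
    have h1 := hw z
    rwa [hz, one_mul] at h1
  have Φsurj' : ∀ α : Module.End A M, ∃ a' : A', ∀ m, MulOpposite.op a' • m = α m := by
    intro α
    obtain ⟨z, hz⟩ := hgbij.2 1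
    have hw : ∀ w : NcT A M' M, ∃ a' : A', ∀ m,
        MulOpposite.op a' • m = α (MulOpposite.op (g w) • m) := by
      intro w
      induction w using NcT.induction_on with
      | h0 => exact ⟨0, fun m => by simp⟩
      | hp m' n => exact ⟨g (ntmul A M' M m' (α n)), fun m => by
          rw [← hassoc₁ m (α n) m', ← hassoc₁ m n m', map_smul]⟩
      | hn w hw =>
          obtain ⟨a', ha'⟩ := hw
          exact ⟨-a', fun m => by
            rw [map_neg, MulOpposite.op_neg, MulOpposite.op_neg, neg_smul, neg_smul, map_neg, ha']⟩
      | ha w₁ w₂ h₁ h₂ =>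
          obtain ⟨a₁, h1⟩ := h₁
          obtain ⟨a₂, h2⟩ := h₂
          exact ⟨a₁ + a₂, fun m => by
            rw [map_add, MulOpposite.op_add, MulOpposite.op_add, add_smul, add_smul, map_add,
              h1, h2]⟩
    obtain ⟨a', ha'⟩ := hw z
    exact ⟨a', fun m => by rw [ha' m, hz, MulOpposite.op_one, one_smul]⟩
  let Φ : A' →+* (Module.End A M)ᵐᵒᵖ :=
  { toFun := fun a' => MulOpposite.op
      { toFun := fun m => MulOpposite.op a' • m
        map_add' := fun m n => smul_add _ _ _
        map_smul' := fun a m => (smul_comm a (MulOpposite.op a') m).symm }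
    map_one' := by
      apply MulOpposite.unop_injective
      ext m
      show MulOpposite.op (1 : A') • m = m
      rw [MulOpposite.op_one, one_smul]
    map_mul' := fun a' b' => by
      apply MulOpposite.unop_injective
      ext m
      show MulOpposite.op (a' * b') • m = MulOpposite.op b' • (MulOpposite.op a' • m)
      rw [MulOpposite.op_mul, mul_smul]
    map_zero' := by
      apply MulOpposite.unop_injective
      ext m
      show MulOpposite.op (0 : A') • m = 0
      rw [MulOpposite.op_zero, zero_smul]
    map_add' := fun a' b' => by
      apply MulOpposite.unop_injective
      ext m
      show MulOpposite.op (a' + b') • m = MulOpposite.op a' • m + MulOpposite.op b' • m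
      rw [MulOpposite.op_add, add_smul] }
  have hΦinj : Function.Injective Φ := by
    intro a b hab
    have hm : ∀ m : M, MulOpposite.op a • m = MulOpposite.op b • m := fun m =>
      congrArg (fun (x : (Module.End A M)ᵐᵒᵖ) => x.unop m) hab
    have h0 := key_inj (a - b) (fun m => by
      rw [MulOpposite.op_sub, sub_smul, hm, sub_self])
    exact sub_eq_zero.mp h0
  have hΦsurj : Function.Surjective Φ := by
    intro x
    obtain ⟨a', ha'⟩ := Φsurj' x.unop
    refine ⟨a', ?_⟩
    apply MulOpposite.unop_injective
    ext m
    exact ha' m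
  -- Part 2
  have key2 : ∀ m' : M', (∀ m : M, f (ntmul A' M M' m m') = 0) → m' = 0 := by
    intro m' hm'
    have stepA : ∀ m : M, g (ntmul A M' M m' m) = 0 := by
      intro m
      obtain ⟨z, hz⟩ := hgbij.2 1
      have hw : ∀ w : NcT A M' M, g w * g (ntmul A M' M m' m) = 0 := by
        intro w
        induction w using NcT.induction_on with
        | h0 => rw [map_zero, zero_mul]
        | hp n' n =>
            rw [← hgr]
            have hzz : MulOpposite.op (g (ntmul A M' M m' m)) • n = 0 := by
              rw [← hassoc₁ n m m', hm' n, zero_smul]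
            rw [hzz, ntmul_zero_right, map_zero]
        | hn w hw => rw [map_neg, neg_mul, hw, neg_zero]
        | ha w₁ w₂ h₁ h₂ => rw [map_add, add_mul, h₁, h₂, add_zero]
      have h1 := hw z
      rwa [hz, one_mul] at h1
    obtain ⟨z, hz⟩ := hfbij.2 1
    have hw : ∀ w : NcT A' M M', MulOpposite.op (f w) • m' = 0 := by
      intro w
      induction w using NcT.induction_on with
      | h0 => rw [map_zero, MulOpposite.op_zero, zero_smul]
      | hp n n'' => rw [← hassoc₂ m' n'' n, stepA n, zero_smul]
      | hn w hw => rw [map_neg, MulOpposite.op_neg, neg_smul, hw, neg_zero]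
      | ha w₁ w₂ h₁ h₂ => rw [map_add, MulOpposite.op_add, add_smul, h₁, h₂, add_zero]
    have h1 := hw z
    rwa [hz, MulOpposite.op_one, one_smul] at h1
  have Ψsurj' : ∀ l : M →ₗ[A] A, ∃ m' : M', ∀ m, f (ntmul A' M M' m m') = l m := by
    intro l
    obtain ⟨z, hz⟩ := hgbij.2 1
    have hw : ∀ w : NcT A M' M, ∃ m' : M', ∀ m,
        f (ntmul A' M M' m m') = l (MulOpposite.op (g w) • m) := by
      intro w
      induction w using NcT.induction_on with
      | h0 => exact ⟨0, fun m => by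
          rw [ntmul_zero_right, map_zero, map_zero, MulOpposite.op_zero, zero_smul, map_zero]⟩
      | hp n' n => exact ⟨MulOpposite.op (l n) • n', fun m => by
          rw [hfr, ← hassoc₁ m n n', map_smul, smul_eq_mul]⟩
      | hn w hw =>
          obtain ⟨m'', h⟩ := hw
          refine ⟨-m'', fun m => ?_⟩
          rw [ntmul_neg_right, map_neg, h, map_neg g, MulOpposite.op_neg, neg_smul, map_neg]
      | ha w₁ w₂ h₁ h₂ =>
          obtain ⟨m₁, hh1⟩ := h₁
          obtain ⟨m₂, hh2⟩ := h₂
          refine ⟨m₁ + m₂, fun m => ?_⟩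
          rw [ntmul_add_right, map_add, hh1, hh2, map_add g, MulOpposite.op_add, add_smul,
            map_add]
    obtain ⟨m', hm'⟩ := hw z
    exact ⟨m', fun m => by rw [hm' m, hz, MulOpposite.op_one, one_smul]⟩
  let Ψ : M' →+ (M →ₗ[A] A) :=
  { toFun := fun m' =>
      { toFun := fun m => f (ntmul A' M M' m m')
        map_add' := fun m₁ m₂ => by
          show f (ntmul A' M M' (m₁ + m₂) m')
              = f (ntmul A' M M' m₁ m') + f (ntmul A' M M' m₂ m')
          rw [ntmul_add_left, map_add]
        map_smul' := fun a m => by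
          show f (ntmul A' M M' (a • m) m') = a * f (ntmul A' M M' m m')
          exact hfl a m m' }
    map_zero' := by
      ext m
      show f (ntmul A' M M' m 0) = 0
      rw [ntmul_zero_right, map_zero]
    map_add' := fun x y => by
      ext m
      show f (ntmul A' M M' m (x + y)) = f (ntmul A' M M' m x) + f (ntmul A' M M' m y)
      rw [ntmul_add_right, map_add] }
  have hΨinj : Function.Injective Ψ := by
    rw [injective_iff_map_eq_zero]
    intro m' h
    exact key2 m' (fun m => congrArg (fun (l : M →ₗ[A] A) => l m) h)
  have hΨsurj : Function.Surjective Ψ := by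
    intro l
    obtain ⟨m', hm'⟩ := Ψsurj' l
    refine ⟨m', ?_⟩
    ext m
    exact hm' m
  refine ⟨⟨RingEquiv.ofBijective Φ ⟨hΦinj, hΦsurj⟩, fun a' m => rfl⟩,
    ⟨AddEquiv.ofBijective Ψ ⟨hΨinj, hΨsurj⟩, fun m' m => rfl, ?_, ?_⟩⟩
  · intro a' m' m
    show f (ntmul A' M M' m (a' • m')) = f (ntmul A' M M' (MulOpposite.op a' • m) m')
    rw [ntmul_smul]
  · intro a m' m
    exact hfr a m m'
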